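/- Let d ≥ 1, let 𝕋^d = (ℝ/ℤ)^d carry its Haar probability measure m, and let g₁, …, g_n : 𝕋^d → 𝕋^d be bijections that preserve m and are such that the submonoid G of self-maps of 𝕋^d generated by {g₁, …, g_n} under composition is finite. Let X₁, …, X_n be a finite partition of 𝕋^d into Borel sets and define T : 𝕋^d → 𝕋^d by T x = g_i x for x ∈ X_i. Then there exists a T-invariant Borel probability measure μ that is absolutely continuous with respect to m; in fact one can take μ to be the normalized restriction of m to a suitable Borel set Y of positive Haar measure, i.e., μ(A) = m(A ∩ Y)/m(Y). -/

import Mathlib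

open MeasureTheory

instance : Fact ((0:ℝ) < 1) := ⟨zero_lt_one⟩

/-- The `d`-dimensional torus `(ℝ/ℤ)^d`, with its Haar probability measure `volume`. -/
abbrev Torus (d : ℕ) := Fin d → AddCircle (1 : ℝ)

instance : IsProbabilityMeasure (volume : Measure (AddCircle (1:ℝ))) :=
  ⟨by simp [AddCircle.measure_univ]⟩

instance (d : ℕ) : IsProbabilityMeasure (volume : Measure (Torus d)) := inferInstance

/-- A piecewise map of the torus whose pieces are moved by Haar-measure-preserving
bijections generating a finite submonoid under composition admits an absolutely
continuous invariant probability measure; in fact, the normalized restriction of the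
Haar measure to a suitable Borel set `Y` of positive measure. -/
theorem exists_acim_of_weakly_periodic_pieces
    (d n : ℕ) (hd : 1 ≤ d)
    (g : Fin n → Function.End (Torus d))
    (hbij : ∀ i, Function.Bijective (g i))
    (hpres : ∀ i, MeasurePreserving (g i) (volume : Measure (Torus d)) volume)
    (hfin : (Submonoid.closure (Set.range g) : Set (Function.End (Torus d))).Finite)
    (X : Fin n → Set (Torus d))
    (hXmeas : ∀ i, MeasurableSet (X i))
    (hpart : ∀ x : Torus d, ∃! i : Fin n, x ∈ X i)
    (T : Torus d → Torus d)
    (hT : ∀ i : Fin n, ∀ x ∈ X i, T x = g i x) :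
    ∃ Y : Set (Torus d), MeasurableSet Y ∧ 0 < volume Y ∧
      ∃ μ : Measure (Torus d), IsProbabilityMeasure μ ∧
        (∀ A : Set (Torus d), MeasurableSet A → μ (T ⁻¹' A) = μ A) ∧
        μ ≪ (volume : Measure (Torus d)) ∧
        ∀ A : Set (Torus d), MeasurableSet A → μ A = volume (A ∩ Y) / volume Y := by
  classical
  have hidx : ∀ x : Torus d, ∃ i, x ∈ X i := fun x => (hpart x).exists
  set idx : Torus d → Fin n := fun x => (hidx x).choose with hidxdef
  have hmem : ∀ x, x ∈ X (idx x) := fun x => (hidx x).choose_spec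
  have hidx_eq : ∀ x i, x ∈ X i → idx x = i := fun x i hi => (hpart x).unique (hmem x) hi
  have hTx : ∀ x, T x = g (idx x) x := fun x => hT _ x (hmem x)
  have hgmeas : ∀ i, Measurable (g i) := fun i => (hpres i).measurable
  have hTpre : ∀ A : Set (Torus d), T ⁻¹' A = ⋃ i, X i ∩ g i ⁻¹' A := by
    intro A; ext x
    simp only [Set.mem_preimage, Set.mem_iUnion, Set.mem_inter_iff]
    constructor
    · intro h; exact ⟨idx x, hmem x, by show g (idx x) x ∈ A; rwa [← hTx x]⟩
    · rintro ⟨i, hxi, hgi⟩; rwa [hT i x hxi]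
  have hTmeas : Measurable T := fun A hA => by
    rw [hTpre]; exact MeasurableSet.iUnion fun i => (hXmeas i).inter (hgmeas i hA)
  have hemb : ∀ i, MeasurableEmbedding (g i) :=
    fun i => (hgmeas i).measurableEmbedding (hbij i).1
  have himg_eq : ∀ i (S : Set (Torus d)), MeasurableSet S →
      volume (g i '' S) = volume S := by
    intro i S hS
    have := (hpres i).measure_preimage ((hemb i).measurableSet_image.2 hS).nullMeasurableSet
    rw [Set.preimage_image_eq S (hbij i).1] at this
    exact this.symm
  have hTimg : ∀ E : Set (Torus d), T '' E = ⋃ i, g i '' (E ∩ X i) := by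
    intro E; ext y
    simp only [Set.mem_image, Set.mem_iUnion, Set.mem_inter_iff]
    constructor
    · rintro ⟨x, hx, rfl⟩; exact ⟨idx x, x, ⟨hx, hmem x⟩, (hTx x).symm⟩
    · rintro ⟨i, x, ⟨hxE, hxX⟩, rfl⟩; exact ⟨x, hxE, hT i x hxX⟩
  have himg_meas : ∀ E : Set (Torus d), MeasurableSet E → MeasurableSet (T '' E) := by
    intro E hE; rw [hTimg]
    exact MeasurableSet.iUnion fun i => (hemb i).measurableSet_image.2 (hE.inter (hXmeas i))
  -- partition sum
  have hXdisj : Pairwise (Function.onFun Disjoint X) := by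
    intro i j hij
    refine Set.disjoint_left.2 fun x hxi hxj => hij ?_
    exact ((hpart x).unique hxi hxj)
  have hsum : ∀ E : Set (Torus d), MeasurableSet E →
      ∑ i, volume (E ∩ X i) = volume E := by
    intro E hE
    have h1 : E = ⋃ i, E ∩ X i := by
      ext x; simp only [Set.mem_iUnion, Set.mem_inter_iff]
      exact ⟨fun hx => ⟨idx x, hx, hmem x⟩, fun ⟨i, hx, _⟩ => hx⟩
    have h2 : (⋃ i, E ∩ X i) = ⋃ i ∈ (Finset.univ : Finset (Fin n)), (E ∩ X i) := by simp
    calc ∑ i, volume (E ∩ X i)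
        = volume (⋃ i ∈ (Finset.univ : Finset (Fin n)), (E ∩ X i)) :=
          (measure_biUnion_finset
            (fun i _ j _ hij => (hXdisj hij).mono Set.inter_subset_right Set.inter_subset_right)
            (fun i _ => hE.inter (hXmeas i))).symm
      _ = volume E := by rw [← h2, ← h1]
  have himg_le : ∀ E : Set (Torus d), MeasurableSet E → volume (T '' E) ≤ volume E := by
    intro E hE
    rw [hTimg]
    calc volume (⋃ i, g i '' (E ∩ X i)) ≤ ∑ i, volume (g i '' (E ∩ X i)) :=
          measure_iUnion_fintype_le _ _
      _ = ∑ i, volume (E ∩ X i) := by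
          exact Finset.sum_congr rfl fun i _ => himg_eq i _ (hE.inter (hXmeas i))
      _ = volume E := hsum E hE
  -- iterated images of the whole space
  set E : ℕ → Set (Torus d) := fun k => T^[k] '' Set.univ with hEdef
  have hE0 : E 0 = Set.univ := by simp [hEdef]
  have hEsucc : ∀ k, E (k+1) = T '' E k := by
    intro k
    show T^[k+1] '' Set.univ = T '' (T^[k] '' Set.univ)
    rw [Function.iterate_succ', Set.image_comp]
  have hEmeas : ∀ k, MeasurableSet (E k) := by
    intro k; induction k with
    | zero => rw [hE0]; exact MeasurableSet.univ
    | succ k ih => rw [hEsucc]; exact himg_meas _ ih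
  have hEanti : Antitone E := by
    refine antitone_nat_of_succ_le ?_
    intro k; induction k with
    | zero => rw [hE0]; exact Set.subset_univ _
    | succ k ih =>
      rw [hEsucc (k+1)]
      exact (Set.image_mono ih).trans (hEsucc k).symm.subset
  -- itineraries
  let H : ℕ → Torus d → Function.End (Torus d) :=
    fun k => Nat.rec (fun _ => 1) (fun k Hk => fun x => g (idx (T^[k] x)) * Hk x) k
  have hH0 : ∀ x, H 0 x = 1 := fun _ => rfl
  have hHsucc : ∀ k x, H (k+1) x = g (idx (T^[k] x)) * H k x := fun _ _ => rfl
  have hHapp : ∀ k x, T^[k] x = H k x x := by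
    intro k; induction k with
    | zero => intro x; rfl
    | succ k ih =>
      intro x
      rw [Function.iterate_succ_apply', hHsucc]
      show T (T^[k] x) = g (idx (T^[k] x)) (H k x x)
      rw [← ih x, ← hTx (T^[k] x)]
  have hHmem : ∀ k x, H k x ∈ Submonoid.closure (Set.range g) := by
    intro k; induction k with
    | zero => intro x; exact one_mem _
    | succ k ih => intro x; exact mul_mem (Submonoid.subset_closure ⟨_, rfl⟩) (ih x)
  have hHmeas : ∀ k (u : Function.End (Torus d)), MeasurableSet {x | H k x = u} := by
    intro k; induction k with
    | zero =>
      intro u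
      by_cases h : (1 : Function.End (Torus d)) = u
      · have : {x : Torus d | H 0 x = u} = Set.univ := by ext x; simp [hH0, h]
        rw [this]; exact MeasurableSet.univ
      · have : {x : Torus d | H 0 x = u} = ∅ := by ext x; simp [hH0, h]
        rw [this]; exact MeasurableSet.empty
    | succ k ih =>
      intro u
      have heq : {x | H (k+1) x = u} =
          ⋃ i, ((T^[k]) ⁻¹' (X i) ∩
            ⋃ v ∈ hfin.toFinset.filter (fun v => g i * v = u), {x | H k x = v}) := by
        ext x
        simp only [Set.mem_setOf_eq, Set.mem_iUnion, Set.mem_inter_iff, Set.mem_preimage,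
          Finset.mem_filter, Set.Finite.mem_toFinset, exists_prop]
        constructor
        · intro h
          exact ⟨idx (T^[k] x), hmem _, H k x, ⟨hHmem k x, by rw [← hHsucc]; exact h⟩, rfl⟩
        · rintro ⟨i, hxi, v, ⟨hv, hgv⟩, hvx⟩
          rw [hHsucc, hidx_eq _ i hxi, hvx, hgv]
      rw [heq]
      refine MeasurableSet.iUnion fun i => ((hTmeas.iterate k) (hXmeas i)).inter ?_
      exact (hfin.toFinset.filter _).measurableSet_biUnion (fun v _ => ih v)
  -- every element of the closure is a measure-preserving bijection
  have hGmp : ∀ u ∈ Submonoid.closure (Set.range g),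
      Function.Bijective u ∧ MeasurePreserving u (volume : Measure (Torus d)) volume := by
    intro u hu
    induction hu using Submonoid.closure_induction with
    | mem v hv => obtain ⟨i, rfl⟩ := hv; exact ⟨hbij i, hpres i⟩
    | one => exact ⟨Function.bijective_id, MeasurePreserving.id _⟩
    | mul a b _ _ ha hb => exact ⟨ha.1.comp hb.1, ha.2.comp hb.2⟩
  have hGimg : ∀ u ∈ Submonoid.closure (Set.range g), ∀ S : Set (Torus d), MeasurableSet S →
      volume (u '' S) = volume S := by
    intro u hu S hS
    obtain ⟨hub, hup⟩ := hGmp u hu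
    have hue : MeasurableEmbedding u := hup.measurable.measurableEmbedding hub.1
    have := hup.measure_preimage (hue.measurableSet_image.2 hS).nullMeasurableSet
    rw [Set.preimage_image_eq S hub.1] at this
    exact this.symm
  -- uniform lower bound on the measures of the images
  have hGne : hfin.toFinset.Nonempty := ⟨1, hfin.mem_toFinset.2 (one_mem _)⟩
  have hcard : (hfin.toFinset.card : ENNReal) ≠ 0 := by
    simpa using Finset.card_ne_zero.2 hGne
  have hlow : ∀ k, (hfin.toFinset.card : ENNReal)⁻¹ ≤ volume (E k) := by
    intro k
    have hdis : (↑hfin.toFinset : Set (Function.End (Torus d))).PairwiseDisjoint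
        (fun u => {x | H k x = u}) := by
      intro u _ v _ huv
      exact Set.disjoint_left.2 fun x hxu hxv => huv (hxu.symm.trans hxv)
    have hcover : (⋃ u ∈ hfin.toFinset, {x | H k x = u}) = Set.univ := by
      ext x
      simp only [Set.mem_iUnion, Set.mem_univ, iff_true, Set.mem_setOf_eq, exists_prop]
      exact ⟨H k x, hfin.mem_toFinset.2 (hHmem k x), rfl⟩
    have hsum1 : ∑ u ∈ hfin.toFinset, volume {x | H k x = u} = 1 := by
      rw [← measure_biUnion_finset hdis (fun u _ => hHmeas k u), hcover, measure_univ]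
    obtain ⟨u, huG, humax⟩ :=
      hfin.toFinset.exists_max_image (fun u => volume {x | H k x = u}) hGne
    have h1 : (1:ENNReal) ≤ hfin.toFinset.card * volume {x | H k x = u} := by
      calc (1:ENNReal) = ∑ v ∈ hfin.toFinset, volume {x | H k x = v} := hsum1.symm
        _ ≤ ∑ _v ∈ hfin.toFinset, volume {x | H k x = u} :=
            Finset.sum_le_sum fun v hv => humax v hv
        _ = hfin.toFinset.card * volume {x | H k x = u} := by
            rw [Finset.sum_const, nsmul_eq_mul]
    have h2 : (hfin.toFinset.card : ENNReal)⁻¹ ≤ volume {x | H k x = u} := by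
      have h3 := mul_le_mul_right h1 (hfin.toFinset.card : ENNReal)⁻¹
      rwa [mul_one, ← mul_assoc, ENNReal.inv_mul_cancel hcard (ENNReal.natCast_ne_top _),
        one_mul] at h3
    calc (hfin.toFinset.card : ENNReal)⁻¹ ≤ volume {x | H k x = u} := h2
      _ = volume (u '' {x | H k x = u}) :=
          (hGimg u (hfin.mem_toFinset.1 huG) _ (hHmeas k u)).symm
      _ ≤ volume (E k) := by
          refine measure_mono ?_
          rintro y ⟨x, hx, rfl⟩
          have : u x = T^[k] x := by rw [hHapp k x, hx]
          rw [this]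
          exact ⟨x, Set.mem_univ x, rfl⟩
  -- the invariant set
  set Y : Set (Torus d) := ⋂ k, E k with hYdef
  have hYmeas : MeasurableSet Y := MeasurableSet.iInter fun k => hEmeas k
  have hYsub : ∀ k, Y ⊆ E k := fun k => Set.iInter_subset _ k
  have hYvol : (hfin.toFinset.card : ENNReal)⁻¹ ≤ volume Y := by
    have hdir : Directed (· ⊇ ·) E := fun i j =>
      ⟨max i j, hEanti (le_max_left i j), hEanti (le_max_right i j)⟩
    rw [hYdef, Directed.measure_iInter (fun k => (hEmeas k).nullMeasurableSet) hdir
      ⟨0, measure_ne_top _ _⟩]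
    exact le_iInf fun k => hlow k
  have hYpos : 0 < volume Y :=
    lt_of_lt_of_le (ENNReal.inv_pos.2 (ENNReal.natCast_ne_top _)) hYvol
  -- T '' Y = Y
  have hTY : T '' Y = Y := by
    apply Set.Subset.antisymm
    · rintro y ⟨x, hx, rfl⟩
      refine Set.mem_iInter.2 fun k => ?_
      cases k with
      | zero => rw [hE0]; trivial
      | succ k => rw [hEsucc k]; exact ⟨x, Set.mem_iInter.1 hx k, rfl⟩
    · intro y hy
      have hFfin : (T ⁻¹' {y}).Finite := by
        have hsub : T ⁻¹' {y} ⊆ ⋃ i, {x | g i x = y} := by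
          intro x hx
          refine Set.mem_iUnion.2 ⟨idx x, ?_⟩
          show g (idx x) x = y
          rw [← hTx x]; exact hx
        refine Set.Finite.subset (Set.finite_iUnion fun i => ?_) hsub
        refine Set.Subsingleton.finite fun a ha b hb => ?_
        exact (hbij i).1 (ha.trans hb.symm)
      have hne : ∀ k, (T ⁻¹' {y} ∩ E k).Nonempty := by
        intro k
        have h1 : y ∈ E (k+1) := Set.mem_iInter.1 hy (k+1)
        rw [hEsucc k] at h1
        obtain ⟨x, hxk, hxy⟩ := h1
        exact ⟨x, by simp [hxy], hxk⟩
      haveI : Finite ↥(T ⁻¹' {y}) := hFfin.to_subtype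
      choose xk hxk using hne
      let f : ℕ → ↥(T ⁻¹' {y}) := fun k => ⟨xk k, (hxk k).1⟩
      obtain ⟨x₀, hx₀⟩ := Finite.exists_infinite_fiber f
      have hx₀inf : (f ⁻¹' {x₀}).Infinite := Set.infinite_coe_iff.1 hx₀
      have hx₀Y : (x₀ : Torus d) ∈ Y := by
        refine Set.mem_iInter.2 fun k => ?_
        obtain ⟨m, hm, hkm⟩ := hx₀inf.exists_gt k
        have : f m = x₀ := hm
        have hxm : xk m = (x₀ : Torus d) := congrArg Subtype.val this
        exact hEanti hkm.le (hxm ▸ (hxk m).2)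
      exact ⟨(x₀ : Torus d), hx₀Y, x₀.2⟩
  -- forward images of subsets of Y preserve measure
  have hkey : ∀ S : Set (Torus d), MeasurableSet S → S ⊆ Y → volume (T '' S) = volume S := by
    intro S hS hSY
    have hcomp : MeasurableSet (Y \ S) := hYmeas.diff hS
    have ha : volume (T '' S) ≤ volume S := himg_le S hS
    have hb : volume (T '' (Y \ S)) ≤ volume (Y \ S) := himg_le _ hcomp
    have hsplit : volume S + volume (Y \ S) = volume Y := by
      rw [← measure_union (Set.disjoint_sdiff_right) hcomp, Set.union_diff_cancel hSY]
    have hcov : Y ⊆ T '' S ∪ T '' (Y \ S) := by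
      intro y hy
      rw [← hTY] at hy
      obtain ⟨x, hxY, rfl⟩ := hy
      by_cases hxS : x ∈ S
      · exact Or.inl ⟨x, hxS, rfl⟩
      · exact Or.inr ⟨x, ⟨hxY, hxS⟩, rfl⟩
    have hle : volume S + volume (Y \ S) ≤ volume (T '' S) + volume (Y \ S) := by
      calc volume S + volume (Y \ S) = volume Y := hsplit
        _ ≤ volume (T '' S ∪ T '' (Y \ S)) := measure_mono hcov
        _ ≤ volume (T '' S) + volume (T '' (Y \ S)) := measure_union_le _ _
        _ ≤ volume (T '' S) + volume (Y \ S) := add_le_add_right hb _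
    have : volume S ≤ volume (T '' S) :=
      (ENNReal.add_le_add_iff_right (measure_ne_top _ _)).1 hle
    exact le_antisymm ha this
  -- invariance of the restricted measure
  have hinv : ∀ A : Set (Torus d), MeasurableSet A →
      volume (T ⁻¹' A ∩ Y) = volume (A ∩ Y) := by
    intro A hA
    have hB : MeasurableSet (A ∩ Y) := hA.inter hYmeas
    have hstep : T ⁻¹' A ∩ Y = T ⁻¹' (A ∩ Y) ∩ Y := by
      ext x
      simp only [Set.mem_inter_iff, Set.mem_preimage]
      constructor
      · rintro ⟨hxA, hxY⟩
        exact ⟨⟨hxA, hTY ▸ ⟨x, hxY, rfl⟩⟩, hxY⟩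
      · rintro ⟨⟨hxA, _⟩, hxY⟩; exact ⟨hxA, hxY⟩
    have hEset : MeasurableSet (T ⁻¹' (A ∩ Y) ∩ Y) := (hTmeas hB).inter hYmeas
    have himgE : T '' (T ⁻¹' (A ∩ Y) ∩ Y) = A ∩ Y := by
      apply Set.Subset.antisymm
      · rintro y ⟨x, ⟨hx1, _⟩, rfl⟩; exact hx1
      · intro b hb
        have hbY : b ∈ Y := hb.2
        rw [← hTY] at hbY
        obtain ⟨x, hxY, rfl⟩ := hbY
        exact ⟨x, ⟨hb, hxY⟩, rfl⟩
    rw [hstep]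
    rw [← hkey _ hEset (Set.inter_subset_right), himgE]
  -- assemble the measure
  refine ⟨Y, hYmeas, hYpos, (volume Y)⁻¹ • volume.restrict Y, ?_, ?_, ?_, ?_⟩
  · constructor
    rw [Measure.smul_apply, Measure.restrict_apply_univ, smul_eq_mul,
      ENNReal.inv_mul_cancel hYpos.ne' (measure_ne_top _ _)]
  · intro A hA
    rw [Measure.smul_apply, Measure.smul_apply, Measure.restrict_apply (hTmeas hA),
      Measure.restrict_apply hA, smul_eq_mul, smul_eq_mul, hinv A hA]
  · have h1 : volume.restrict Y ≪ (volume : Measure (Torus d)) :=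
      Measure.restrict_le_self.absolutelyContinuous
    intro s hs
    simp only [Measure.smul_apply, smul_eq_mul]
    rw [h1 hs, mul_zero]
  · intro A hA
    rw [Measure.smul_apply, Measure.restrict_apply hA, smul_eq_mul,
      ENNReal.div_eq_inv_mul]
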